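/- For the sequence (e_k) of standard unit vectors in ℓ¹, every weak* cluster point x** of (e_k) in (ℓ¹)** satisfies dist(x**, ℓ¹) = 1, and the diameter of the set of weak* cluster points equals 2; moreover every subsequence has the same property, so δ̃(e_k) = 2. -/

import Mathlib

open Filter Topology NormedSpace

/-- The set of weak* cluster points in the bidual of a sequence `(x k)` in `X`. -/
def weakStarClusterPoints {X : Type*} [NormedAddCommGroup X] [NormedSpace ℝ X]
    (x : ℕ → X) : Set (StrongDual ℝ (StrongDual ℝ X)) :=
  {y | MapClusterPt (StrongDual.toWeakDual y) atTop
        fun k => StrongDual.toWeakDual (inclusionInDoubleDual ℝ X (x k))}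

/-- `δ_X (x k)`: the (norm) diameter of the set of weak* cluster points of `(x k)` in `X**`. -/
noncomputable def deltaSeq {X : Type*} [NormedAddCommGroup X] [NormedSpace ℝ X]
    (x : ℕ → X) : ℝ :=
  Metric.diam (weakStarClusterPoints x)

/-- `δ̃ (x k)`: the infimum of `δ_X` over all subsequences of `(x k)`. -/
noncomputable def deltaTilde {X : Type*} [NormedAddCommGroup X] [NormedSpace ℝ X]
    (x : ℕ → X) : ℝ :=
  sInf {d : ℝ | ∃ φ : ℕ → ℕ, StrictMono φ ∧ d = deltaSeq (x ∘ φ)}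

/-- The sequence of standard unit vectors `e_k` in `ℓ¹`. -/
noncomputable def stdBasisSeq : ℕ → lp (fun _ : ℕ => ℝ) 1 := fun k =>
  lp.single 1 k (1 : ℝ)

/-! ### Auxiliary machinery -/

noncomputable abbrev ℓ1 : Type := lp (fun _ : ℕ => ℝ) 1

lemma l1_summable (x : ℓ1) : Summable fun k => ‖x k‖ := by
  have := Memℓp.summable (p := 1) (by norm_num) (lp.memℓp x)
  simpa using this

lemma l1_norm (x : ℓ1) : ‖x‖ = ∑' k, ‖x k‖ := by
  have := lp.norm_eq_tsum_rpow (p := 1) (by norm_num) x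
  simpa using this

lemma pair_summable (f : ℕ → ℝ) (hf : ∀ k, |f k| ≤ 1) (x : ℓ1) :
    Summable fun k => f k * x k := by
  refine Summable.of_norm (Summable.of_nonneg_of_le (fun k => norm_nonneg _)
    (fun k => ?_) (l1_summable x))
  calc ‖f k * x k‖ = |f k| * ‖x k‖ := by rw [norm_mul]; rfl
  _ ≤ 1 * ‖x k‖ := by gcongr; exact hf k
  _ = ‖x k‖ := one_mul _

/-- The element of `(ℓ¹)*` given by pairing with a sequence bounded by 1. -/
noncomputable def pairCLM (f : ℕ → ℝ) (hf : ∀ k, |f k| ≤ 1) : StrongDual ℝ ℓ1 :=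
  LinearMap.mkContinuous
    { toFun := fun x => ∑' k, f k * x k
      map_add' := fun x y => by
        simp only [lp.coeFn_add, Pi.add_apply, mul_add]
        exact Summable.tsum_add (pair_summable f hf x) (pair_summable f hf y)
      map_smul' := fun c x => by
        simp only [lp.coeFn_smul, Pi.smul_apply, smul_eq_mul, RingHom.id_apply]
        rw [← tsum_mul_left]
        congr 1; funext k; ring }
    1 (fun x => by
      simp only [LinearMap.coe_mk, AddHom.coe_mk, one_mul]
      calc ‖∑' k, f k * x k‖ ≤ ∑' k, ‖f k * x k‖ :=
        norm_tsum_le_tsum_norm ((pair_summable f hf x).norm)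
      _ ≤ ∑' k, ‖x k‖ := by
          refine Summable.tsum_le_tsum (fun k => ?_) ((pair_summable f hf x).norm) (l1_summable x)
          rw [norm_mul]
          calc ‖f k‖ * ‖x k‖ ≤ 1 * ‖x k‖ := by gcongr; exact hf k
          _ = ‖x k‖ := one_mul _
      _ = ‖x‖ := (l1_norm x).symm)

lemma pairCLM_apply (f : ℕ → ℝ) (hf : ∀ k, |f k| ≤ 1) (x : ℓ1) :
    pairCLM f hf x = ∑' k, f k * x k := rfl

lemma pairCLM_norm_le (f : ℕ → ℝ) (hf : ∀ k, |f k| ≤ 1) : ‖pairCLM f hf‖ ≤ 1 :=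
  LinearMap.mkContinuous_norm_le _ zero_le_one _

lemma pairCLM_single (f : ℕ → ℝ) (hf : ∀ k, |f k| ≤ 1) (j : ℕ) :
    pairCLM f hf (lp.single 1 j (1 : ℝ)) = f j := by
  rw [pairCLM_apply]
  rw [tsum_eq_single j]
  · rw [lp.single_apply_self]; ring
  · intro k hk
    rw [lp.single_apply_ne 1 j _ hk, mul_zero]

lemma norm_e (k : ℕ) : ‖(lp.single 1 k (1:ℝ) : ℓ1)‖ = 1 := by
  have := lp.norm_single (p := 1) (E := fun _ : ℕ => ℝ) (by norm_num) k (1:ℝ)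
  simpa using this

lemma clusterPt_eval {y : StrongDual ℝ (StrongDual ℝ ℓ1)} {u : ℕ → ℓ1}
    (hy : y ∈ weakStarClusterPoints u) (F : StrongDual ℝ ℓ1) :
    MapClusterPt (y F) atTop (fun k => F (u k)) := by
  have hc : ContinuousAt (fun w : WeakDual ℝ (StrongDual ℝ ℓ1) => w F) (StrongDual.toWeakDual y) :=
    (WeakDual.eval_continuous F).continuousAt
  exact MapClusterPt.continuousAt_comp hc hy

lemma eq_of_clusterPt_tendsto {v : ℕ → ℝ} {c L : ℝ}
    (h : MapClusterPt c atTop v) (hL : Tendsto v atTop (𝓝 L)) : c = L := by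
  refine eq_of_nhds_neBot (NeBot.mono h.clusterPt ?_)
  exact inf_le_inf_left _ hL

lemma abs_le_of_clusterPt {v : ℕ → ℝ} {c M : ℝ}
    (h : MapClusterPt c atTop v) (hM : ∀ k, |v k| ≤ M) : |c| ≤ M := by
  have hmem : c ∈ closure (Set.Icc (-M) M) := by
    rw [mem_closure_iff_clusterPt]
    refine h.clusterPt.mono ?_
    rw [Filter.le_principal_iff, Filter.mem_map]
    filter_upwards with k
    exact abs_le.mp (hM k)
  rw [isClosed_Icc.closure_eq] at hmem
  exact abs_le.mpr hmem

lemma norm_le_one_of_cluster {u : ℕ → ℓ1} (hu : ∀ k, ‖u k‖ ≤ 1)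
    {y : StrongDual ℝ (StrongDual ℝ ℓ1)} (hy : y ∈ weakStarClusterPoints u) : ‖y‖ ≤ 1 := by
  refine ContinuousLinearMap.opNorm_le_bound y zero_le_one (fun F => ?_)
  rw [Real.norm_eq_abs, one_mul]
  refine abs_le_of_clusterPt (clusterPt_eval hy F) (fun k => ?_)
  calc |F (u k)| = ‖F (u k)‖ := rfl
  _ ≤ ‖F‖ * ‖u k‖ := F.le_opNorm _
  _ ≤ ‖F‖ * 1 := by gcongr; exact hu k
  _ = ‖F‖ := mul_one _

lemma exists_cluster (u : ℕ → ℓ1) (hu : ∀ k, ‖u k‖ ≤ 1) :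
    ∃ y, y ∈ weakStarClusterPoints u := by
  set S : Set (WeakDual ℝ (StrongDual ℝ ℓ1)) :=
    WeakDual.toStrongDual ⁻¹' Metric.closedBall 0 1 with hS
  have hcomp : IsCompact S := WeakDual.isCompact_closedBall (𝕜 := ℝ) (E := StrongDual ℝ ℓ1) 0 1
  have hmem : ∀ k, (StrongDual.toWeakDual (inclusionInDoubleDual ℝ ℓ1 (u k))) ∈ S := by
    intro k
    simp only [hS, Set.mem_preimage, Metric.mem_closedBall, dist_zero_right]
    rw [dist_zero_right (E := StrongDual ℝ (StrongDual ℝ ℓ1))]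
    calc ‖WeakDual.toStrongDual (StrongDual.toWeakDual (inclusionInDoubleDual ℝ ℓ1 (u k)))‖
        = ‖inclusionInDoubleDual ℝ ℓ1 (u k)‖ := rfl
      _ ≤ ‖u k‖ := double_dual_bound ℝ ℓ1 (u k)
      _ ≤ 1 := hu k
  obtain ⟨x, -, hx⟩ := hcomp.exists_mapClusterPt (f := atTop)
    (Filter.tendsto_principal.mpr (Filter.Eventually.of_forall hmem))
  refine ⟨WeakDual.toStrongDual x, ?_⟩
  show MapClusterPt (StrongDual.toWeakDual (WeakDual.toStrongDual x)) atTop _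
  convert hx
  rfl

lemma stdBasis_norm_le (φ : ℕ → ℕ) : ∀ k, ‖(stdBasisSeq ∘ φ) k‖ ≤ 1 := fun k =>
  le_of_eq (norm_e _)

set_option maxHeartbeats 1000000 in
/-- Distance of any weak* cluster point of a subsequence of `(e_k)` to `ℓ¹` is 1. -/
lemma infDist_eq_one (φ : ℕ → ℕ) (hφ : StrictMono φ) {y : StrongDual ℝ (StrongDual ℝ ℓ1)}
    (hy : y ∈ weakStarClusterPoints (stdBasisSeq ∘ φ)) :
    Metric.infDist y (Set.range fun v : ℓ1 => inclusionInDoubleDual ℝ ℓ1 v) = 1 := by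
  have hnorm : ‖y‖ ≤ 1 := norm_le_one_of_cluster (stdBasis_norm_le φ) hy
  apply le_antisymm
  · calc Metric.infDist y _ ≤ dist y (inclusionInDoubleDual ℝ ℓ1 0) :=
        Metric.infDist_le_dist_of_mem (Set.mem_range_self 0)
      _ = ‖y‖ := by rw [dist_eq_norm y, map_zero, sub_zero y]
      _ ≤ 1 := hnorm
  · refine le_of_forall_pos_le_add (fun ε hε => ?_)
    have key : ∀ v : ℓ1, 1 - ε ≤ dist y (inclusionInDoubleDual ℝ ℓ1 v) := by
      intro v
      obtain ⟨N, hN⟩ : ∃ N, ∑' k, ‖v (k + N)‖ < ε := by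
        have h0 := tendsto_sum_nat_add (fun k => ‖v k‖)
        exact (h0.eventually (eventually_lt_nhds hε)).exists
      classical
      set f : ℕ → ℝ := fun j => if j < N then (if 0 ≤ v j then -1 else 1) else 1 with hfdef
      have hf : ∀ j, |f j| ≤ 1 := by
        intro j; simp only [hfdef]; split_ifs <;> norm_num
      set F := pairCLM f hf with hF
      have hyF : y F = 1 := by
        refine eq_of_clusterPt_tendsto (clusterPt_eval hy F) ?_
        have hev : ∀ᶠ k in atTop, (1:ℝ) = F ((stdBasisSeq ∘ φ) k) := by
          filter_upwards [eventually_ge_atTop N] with k hk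
          have hlt : ¬ φ k < N := not_lt.mpr (le_trans hk hφ.le_apply)
          simp only [Function.comp, stdBasisSeq, hF, pairCLM_single, hfdef, if_neg hlt]
        exact Tendsto.congr' hev tendsto_const_nhds
      have hFv : F v ≤ ε := by
        have hsum := pair_summable f hf v
        rw [hF, pairCLM_apply, ← Summable.sum_add_tsum_nat_add N hsum]
        have h1 : ∑ k ∈ Finset.range N, f k * v k ≤ 0 := by
          apply Finset.sum_nonpos
          intro k hk
          rw [Finset.mem_range] at hk
          simp only [hfdef, if_pos hk]
          split_ifs with h
          · nlinarith
          · nlinarith [lt_of_not_ge h]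
        have h2 : ∑' k, f (k + N) * v (k + N) ≤ ∑' k, ‖v (k + N)‖ := by
          refine Summable.tsum_le_tsum (fun k => ?_) ((summable_nat_add_iff N).mpr hsum)
            ((summable_nat_add_iff N).mpr (l1_summable v))
          calc f (k+N) * v (k+N) ≤ |f (k+N) * v (k+N)| := le_abs_self _
            _ = |f (k+N)| * |v (k+N)| := abs_mul _ _
            _ ≤ 1 * |v (k+N)| := by gcongr; exact hf _
            _ = ‖v (k+N)‖ := by rw [one_mul]; rfl
        linarith
      calc 1 - ε ≤ y F - F v := by rw [hyF]; linarith
        _ ≤ |y F - F v| := le_abs_self _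
        _ = ‖(y - inclusionInDoubleDual ℝ ℓ1 v) F‖ := by
            rw [ContinuousLinearMap.sub_apply, NormedSpace.dual_def, Real.norm_eq_abs]
        _ ≤ ‖y - inclusionInDoubleDual ℝ ℓ1 v‖ * ‖F‖ := ContinuousLinearMap.le_opNorm _ _
        _ ≤ dist y (inclusionInDoubleDual ℝ ℓ1 v) * 1 := by
            rw [dist_eq_norm y]
            exact mul_le_mul_of_nonneg_left (pairCLM_norm_le f hf) (norm_nonneg (y - inclusionInDoubleDual ℝ ℓ1 v))
        _ = _ := mul_one _
    have hne : Nonempty (Set.range fun v : ℓ1 => inclusionInDoubleDual ℝ ℓ1 v) :=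
      ⟨⟨_, ⟨0, rfl⟩⟩⟩
    rw [Metric.infDist_eq_iInf]
    have : 1 - ε ≤ ⨅ z : (Set.range fun v : ℓ1 => inclusionInDoubleDual ℝ ℓ1 v), dist y z := by
      refine le_ciInf (fun z => ?_)
      obtain ⟨z, v, rfl⟩ := z
      exact key v
    linarith

lemma cluster_subseq {u : ℕ → ℓ1} {ψ : ℕ → ℕ} (hψ : Tendsto ψ atTop atTop)
    {y : StrongDual ℝ (StrongDual ℝ ℓ1)} (hy : y ∈ weakStarClusterPoints (u ∘ ψ)) :
    y ∈ weakStarClusterPoints u :=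
  MapClusterPt.of_comp hψ hy

set_option maxHeartbeats 1000000 in
lemma diam_eq_two (φ : ℕ → ℕ) (hφ : StrictMono φ) :
    Metric.diam (weakStarClusterPoints (stdBasisSeq ∘ φ)) = 2 := by
  classical
  apply le_antisymm
  · refine Metric.diam_le_of_forall_dist_le (by norm_num) (fun a ha b hb => ?_)
    calc dist a b = ‖a - b‖ := dist_eq_norm a b
      _ ≤ ‖a‖ + ‖b‖ := norm_sub_le a b
      _ ≤ 1 + 1 := add_le_add (norm_le_one_of_cluster (stdBasis_norm_le φ) ha)
          (norm_le_one_of_cluster (stdBasis_norm_le φ) hb)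
      _ = 2 := by norm_num
  · have htend0 : Tendsto (fun k : ℕ => 2 * k) atTop atTop :=
      tendsto_atTop_mono (fun k => by simp only [id_eq]; omega) tendsto_id
    have htend1 : Tendsto (fun k : ℕ => 2 * k + 1) atTop atTop :=
      tendsto_atTop_mono (fun k => by simp only [id_eq]; omega) tendsto_id
    obtain ⟨y₀, hy₀⟩ := exists_cluster ((stdBasisSeq ∘ φ) ∘ (fun k => 2 * k))
      (fun k => le_of_eq (norm_e _))
    obtain ⟨y₁, hy₁⟩ := exists_cluster ((stdBasisSeq ∘ φ) ∘ (fun k => 2 * k + 1))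
      (fun k => le_of_eq (norm_e _))
    have h0 : y₀ ∈ weakStarClusterPoints (stdBasisSeq ∘ φ) := cluster_subseq htend0 hy₀
    have h1 : y₁ ∈ weakStarClusterPoints (stdBasisSeq ∘ φ) := cluster_subseq htend1 hy₁
    set f : ℕ → ℝ := fun j => if j ∈ Set.range (fun k : ℕ => φ (2 * k)) then (1:ℝ) else -1
      with hfdef
    have hf : ∀ j, |f j| ≤ 1 := by
      intro j; simp only [hfdef]; split_ifs <;> norm_num
    set F := pairCLM f hf with hF
    have h0F : y₀ F = 1 := by
      refine eq_of_clusterPt_tendsto (clusterPt_eval hy₀ F) ?_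
      refine Tendsto.congr (fun k => ?_) tendsto_const_nhds
      show (1:ℝ) = F (((stdBasisSeq ∘ φ) ∘ (fun k => 2 * k)) k)
      have : φ (2 * k) ∈ Set.range (fun k : ℕ => φ (2 * k)) := ⟨k, rfl⟩
      simp only [Function.comp, stdBasisSeq, hF, pairCLM_single, hfdef, if_pos this]
    have h1F : y₁ F = -1 := by
      refine eq_of_clusterPt_tendsto (clusterPt_eval hy₁ F) ?_
      refine Tendsto.congr (fun k => ?_) tendsto_const_nhds
      show (-1:ℝ) = F (((stdBasisSeq ∘ φ) ∘ (fun k => 2 * k + 1)) k)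
      have hnot : φ (2 * k + 1) ∉ Set.range (fun k : ℕ => φ (2 * k)) := by
        rintro ⟨m, hm⟩
        have := hφ.injective hm
        omega
      simp only [Function.comp, stdBasisSeq, hF, pairCLM_single, hfdef, if_neg hnot]
    have hbdd : Bornology.IsBounded (weakStarClusterPoints (stdBasisSeq ∘ φ)) := by
      refine Metric.isBounded_closedBall (x := (0 : StrongDual ℝ (StrongDual ℝ ℓ1))) (r := 1) |>.subset ?_
      intro z hz
      rw [Metric.mem_closedBall, dist_zero_right z]
      exact norm_le_one_of_cluster (stdBasis_norm_le φ) hz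
    calc (2:ℝ) = |y₀ F - y₁ F| := by rw [h0F, h1F]; norm_num
      _ = ‖(y₀ - y₁) F‖ := by rw [ContinuousLinearMap.sub_apply, Real.norm_eq_abs]
      _ ≤ ‖y₀ - y₁‖ * ‖F‖ := ContinuousLinearMap.le_opNorm _ _
      _ ≤ ‖y₀ - y₁‖ * 1 := mul_le_mul_of_nonneg_left (pairCLM_norm_le f hf) (norm_nonneg (y₀ - y₁))
      _ = dist y₀ y₁ := by rw [mul_one, dist_eq_norm y₀ y₁]
      _ ≤ Metric.diam (weakStarClusterPoints (stdBasisSeq ∘ φ)) :=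
          Metric.dist_le_diam_of_mem hbdd h0 h1

/-- For the sequence `(e_k)` in `ℓ¹`: every weak* cluster point has distance `1`
to `ℓ¹`, the cluster set has diameter `2`; the same holds for every subsequence, so
`δ̃(e_k) = 2`. -/
theorem statement7 :
    (∀ y ∈ weakStarClusterPoints stdBasisSeq,
      Metric.infDist y (Set.range fun v : lp (fun _ : ℕ => ℝ) 1 =>
        inclusionInDoubleDual ℝ (lp (fun _ : ℕ => ℝ) 1) v) = 1) ∧
    Metric.diam (weakStarClusterPoints stdBasisSeq) = 2 ∧
    (∀ φ : ℕ → ℕ, StrictMono φ →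
      (∀ y ∈ weakStarClusterPoints (stdBasisSeq ∘ φ),
        Metric.infDist y (Set.range fun v : lp (fun _ : ℕ => ℝ) 1 =>
          inclusionInDoubleDual ℝ (lp (fun _ : ℕ => ℝ) 1) v) = 1) ∧
      Metric.diam (weakStarClusterPoints (stdBasisSeq ∘ φ)) = 2) ∧
    deltaTilde stdBasisSeq = 2 := by
  refine ⟨?_, ?_, ?_, ?_⟩
  · intro y hy
    exact infDist_eq_one id strictMono_id hy
  · exact diam_eq_two id strictMono_id
  · intro φ hφ
    exact ⟨fun y hy => infDist_eq_one φ hφ hy, diam_eq_two φ hφ⟩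
  · have hset : {d : ℝ | ∃ φ : ℕ → ℕ, StrictMono φ ∧ d = deltaSeq (stdBasisSeq ∘ φ)} = {2} := by
      ext d
      simp only [Set.mem_setOf_eq, Set.mem_singleton_iff]
      constructor
      · rintro ⟨φ, hφ, rfl⟩
        exact diam_eq_two φ hφ
      · rintro rfl
        exact ⟨id, strictMono_id, (diam_eq_two id strictMono_id).symm⟩
    unfold deltaTilde
    rw [hset]
    exact csInf_singleton 2
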